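/- Let H be a weak Hopf algebra and C a left partial H-module coalgebra via ·. Then for all h ∈ H_t, k ∈ H and c ∈ C: (i) h·(k·c) = hk·c; (ii) Δ(h·c) = (h·c₁)⊗c₂; (iii) ε(h·c) = ε(ε_s(h)·c). -/
import Mathlib


open TensorProduct Coalgebra

noncomputable section

variable (k : Type*) [Field k]

section WeakHopfDefs

variable (H : Type*) [Ring H] [Algebra k H] [Coalgebra k H]

/-- The target map `ε_t(h) = ε(1₁ h) 1₂` of a weak bialgebra. -/
def wεt (h : H) : H :=
  (TensorProduct.lid k H)
    ((TensorProduct.map (counit (R := k) ∘ₗ LinearMap.mulRight k h) (LinearMap.id))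
      (comul (R := k) (1 : H)))

/-- The source map `ε_s(h) = 1₁ ε(h 1₂)` of a weak bialgebra. -/
def wεs (h : H) : H :=
  (TensorProduct.rid k H)
    ((TensorProduct.map (LinearMap.id) (counit (R := k) ∘ₗ LinearMap.mulLeft k h))
      (comul (R := k) (1 : H)))

/-- A weak Hopf algebra structure on an algebra `H` which is also a coalgebra:
the weak bialgebra axioms together with an antipode `S`. -/
structure WeakHopf : Type _ where
  /-- Δ is multiplicative -/
  comul_mul : ∀ h g : H, comul (R := k) (h * g) = comul (R := k) h * comul (R := k) g
  /-- ε(hgl) = Σ ε(h g₁) ε(g₂ l) -/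
  counit_weak_mul : ∀ h g l : H, counit (R := k) (h * g * l)
      = LinearMap.mul' k k
          ((TensorProduct.map (counit (R := k) ∘ₗ LinearMap.mulLeft k h)
              (counit (R := k) ∘ₗ LinearMap.mulRight k l)) (comul (R := k) g))
  /-- ε(hgl) = Σ ε(h g₂) ε(g₁ l) -/
  counit_weak_mul' : ∀ h g l : H, counit (R := k) (h * g * l)
      = LinearMap.mul' k k
          ((TensorProduct.map (counit (R := k) ∘ₗ LinearMap.mulLeft k h)
              (counit (R := k) ∘ₗ LinearMap.mulRight k l))
            ((TensorProduct.comm k H H) (comul (R := k) g)))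
  /-- (1 ⊗ Δ(1))(Δ(1) ⊗ 1) = Δ²(1) -/
  comul_one_left :
      ((1 : H) ⊗ₜ[k] comul (R := k) (1 : H))
          * ((TensorProduct.assoc k H H H) (comul (R := k) (1 : H) ⊗ₜ[k] (1 : H)))
        = (LinearMap.lTensor H (comul (R := k))) (comul (R := k) (1 : H))
  /-- (Δ(1) ⊗ 1)(1 ⊗ Δ(1)) = Δ²(1) -/
  comul_one_right :
      ((TensorProduct.assoc k H H H) (comul (R := k) (1 : H) ⊗ₜ[k] (1 : H)))
          * ((1 : H) ⊗ₜ[k] comul (R := k) (1 : H))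
        = (LinearMap.lTensor H (comul (R := k))) (comul (R := k) (1 : H))
  /-- the antipode -/
  S : H →ₗ[k] H
  /-- Σ h₁ S(h₂) = ε_t(h) -/
  antipode_t : ∀ h : H,
      LinearMap.mul' k H ((LinearMap.lTensor H S) (comul (R := k) h)) = wεt k H h
  /-- Σ S(h₁) h₂ = ε_s(h) -/
  antipode_s : ∀ h : H,
      LinearMap.mul' k H ((LinearMap.rTensor H S) (comul (R := k) h)) = wεs k H h
  /-- Σ S(h₁) h₂ S(h₃) = S(h) -/
  antipode_mid : ∀ h : H,
      LinearMap.mul' k H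
        ((TensorProduct.map S (LinearMap.mul' k H ∘ₗ LinearMap.lTensor H S))
          ((LinearMap.lTensor H (comul (R := k))) (comul (R := k) h))) = S h

end WeakHopfDefs

section Actions

variable (H : Type*) [Ring H] [Algebra k H] [Coalgebra k H]
variable (C : Type*) [AddCommGroup C] [Module k C] [Coalgebra k C]

/-- The Sweedler sum `Σ (h g₁ · c₁) ε(g₂ · c₂)` appearing in (PMC3). -/
def pmc3RHS (act : H →ₗ[k] C →ₗ[k] C) (h g : H) (c : C) : C :=
  (TensorProduct.rid k C)
    ((TensorProduct.map
        ((TensorProduct.lift act) ∘ₗ (LinearMap.rTensor C (LinearMap.mulLeft k h)))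
        (counit (R := k) ∘ₗ (TensorProduct.lift act)))
      ((TensorProduct.tensorTensorTensorComm k H H C C)
        (comul (R := k) g ⊗ₜ[k] comul (R := k) c)))

/-- The Sweedler sum `Σ ε(g₁ · c₁) (h g₂ · c₂)` appearing in the symmetry condition. -/
def pmc3symRHS (act : H →ₗ[k] C →ₗ[k] C) (h g : H) (c : C) : C :=
  (TensorProduct.lid k C)
    ((TensorProduct.map
        (counit (R := k) ∘ₗ (TensorProduct.lift act))
        ((TensorProduct.lift act) ∘ₗ (LinearMap.rTensor C (LinearMap.mulLeft k h))))
      ((TensorProduct.tensorTensorTensorComm k H H C C)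
        (comul (R := k) g ⊗ₜ[k] comul (R := k) c)))

/-- (MC2)/(PMC2): `Δ(h·c) = (h₁·c₁) ⊗ (h₂·c₂)`. -/
def SweedlerComulCompat (act : H →ₗ[k] C →ₗ[k] C) : Prop :=
  ∀ (h : H) (c : C),
    comul (R := k) (act h c)
      = (TensorProduct.map (TensorProduct.lift act) (TensorProduct.lift act))
          ((TensorProduct.tensorTensorTensorComm k H H C C)
            (comul (R := k) h ⊗ₜ[k] comul (R := k) c))

/-- `C` is a left partial `H`-module coalgebra via `act` (`act h c = h · c`). -/
structure IsPartialModuleCoalgebra (act : H →ₗ[k] C →ₗ[k] C) : Prop where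
  pmc1 : ∀ c : C, act 1 c = c
  pmc2 : SweedlerComulCompat k H C act
  pmc3 : ∀ (h g : H) (c : C), act h (act g c) = pmc3RHS k H C act h g c

/-- `C` is a symmetric left partial `H`-module coalgebra via `act`. -/
structure IsSymmetricPartialModuleCoalgebra (act : H →ₗ[k] C →ₗ[k] C)
    extends IsPartialModuleCoalgebra k H C act : Prop where
  pmc3sym : ∀ (h g : H) (c : C), act h (act g c) = pmc3symRHS k H C act h g c

/-- `C` is a left `H`-module coalgebra via `act`. -/
structure IsModuleCoalgebra (act : H →ₗ[k] C →ₗ[k] C) : Prop where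
  mc1 : ∀ c : C, act 1 c = c
  mc2 : SweedlerComulCompat k H C act
  mc3 : ∀ (h g : H) (c : C), act h (act g c) = act (h * g) c
  mc4 : ∀ (h : H) (c : C), counit (R := k) (act h c) = counit (R := k) (act (wεs k H h) c)

end Actions

end

set_option linter.unusedSectionVars false
set_option maxHeartbeats 1000000
set_option synthInstance.maxHeartbeats 100000

noncomputable section Aux

open LinearMap

variable {K : Type*} [Field K] {H : Type*} [Ring H] [Algebra K H] [Coalgebra K H]

local notation "Δ1" => (comul (R := K) (1 : H))

private lemma tmul_one_mul (z : H) (T : H ⊗[K] H) :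
    (z ⊗ₜ[K] (1:H)) * T = LinearMap.rTensor H (LinearMap.mulLeft K z) T := by
  induction T using TensorProduct.induction_on with
  | zero => simp
  | tmul a b => simp [Algebra.TensorProduct.tmul_mul_tmul]
  | add a b ha hb => simp [mul_add, ha, hb]

private lemma one_tmul_mul (z : H) (T : H ⊗[K] H) :
    ((1:H) ⊗ₜ[K] z) * T = LinearMap.lTensor H (LinearMap.mulLeft K z) T := by
  induction T using TensorProduct.induction_on with
  | zero => simp
  | tmul a b => simp [Algebra.TensorProduct.tmul_mul_tmul]
  | add a b ha hb => simp [mul_add, ha, hb]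

private lemma mul_tmul_one (z : H) (T : H ⊗[K] H) :
    T * (z ⊗ₜ[K] (1:H)) = LinearMap.rTensor H (LinearMap.mulRight K z) T := by
  induction T using TensorProduct.induction_on with
  | zero => simp
  | tmul a b => simp [Algebra.TensorProduct.tmul_mul_tmul]
  | add a b ha hb => simp [add_mul, ha, hb]

/-- ε_t as a linear map. -/
private def εtL (K : Type*) [Field K] (H : Type*) [Ring H] [Algebra K H] [Coalgebra K H] :
    H →ₗ[K] H :=
  (TensorProduct.lid K H).toLinearMap
    ∘ₗ LinearMap.rTensor H (counit (R := K))
    ∘ₗ LinearMap.mulLeft K (comul (R := K) (1 : H))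
    ∘ₗ ((TensorProduct.mk K H H).flip 1)

/-- ε_s as a linear map. -/
private def εsL (K : Type*) [Field K] (H : Type*) [Ring H] [Algebra K H] [Coalgebra K H] :
    H →ₗ[K] H :=
  (TensorProduct.rid K H).toLinearMap
    ∘ₗ LinearMap.lTensor H (counit (R := K))
    ∘ₗ LinearMap.mulRight K (comul (R := K) (1 : H))
    ∘ₗ ((TensorProduct.mk K H H) 1)

private lemma εtL_eq (h : H) : εtL K H h = wεt K H h := by
  have key : ∀ E : H ⊗[K] H,
      (TensorProduct.lid K H) (LinearMap.rTensor H (counit (R := K)) (E * (h ⊗ₜ[K] (1:H))))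
        = (TensorProduct.lid K H)
            ((TensorProduct.map (counit (R := K) ∘ₗ LinearMap.mulRight K h) (LinearMap.id)) E) := by
    intro E
    induction E using TensorProduct.induction_on with
    | zero => simp
    | tmul a b => simp [Algebra.TensorProduct.tmul_mul_tmul]
    | add a b ha hb => simp [add_mul, ha, hb]
  simpa [εtL, wεt] using key Δ1

private lemma εsL_eq (h : H) : εsL K H h = wεs K H h := by
  have key : ∀ E : H ⊗[K] H,
      (TensorProduct.rid K H) (LinearMap.lTensor H (counit (R := K)) (((1:H) ⊗ₜ[K] h) * E))
        = (TensorProduct.rid K H)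
            ((TensorProduct.map (LinearMap.id) (counit (R := K) ∘ₗ LinearMap.mulLeft K h)) E) := by
    intro E
    induction E using TensorProduct.induction_on with
    | zero => simp
    | tmul a b => simp [Algebra.TensorProduct.tmul_mul_tmul]
    | add a b ha hb => simp [mul_add, ha, hb]
  simpa [εsL, wεs] using key Δ1


private lemma F1' (wh : WeakHopf K H) (h : H) :
    comul (R := K) (wεt K H h) = (wεt K H h ⊗ₜ[K] (1:H)) * Δ1 := by
  set gh : H →ₗ[K] K := counit (R := K) ∘ₗ LinearMap.mulRight K h with hgh
  set Φ : H ⊗[K] H →ₗ[K] H :=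
    (TensorProduct.lid K H).toLinearMap ∘ₗ LinearMap.rTensor H gh with hΦ
  set Ψ : H ⊗[K] (H ⊗[K] H) →ₗ[K] H ⊗[K] H :=
    (TensorProduct.lid K (H ⊗[K] H)).toLinearMap ∘ₗ LinearMap.rTensor (H ⊗[K] H) gh with hΨ
  have hΦe : Φ Δ1 = wεt K H h := rfl
  have key1 : ∀ X : H ⊗[K] (H ⊗[K] H), Ψ (X * ((1:H) ⊗ₜ[K] Δ1)) = Ψ X * Δ1 := by
    intro X
    induction X using TensorProduct.induction_on with
    | zero => simp
    | tmul a T => simp [hΨ, Algebra.TensorProduct.tmul_mul_tmul, smul_mul_assoc]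
    | add a b ha hb => simp [add_mul, ha, hb]
  have key2 : ∀ T : H ⊗[K] H,
      Ψ ((TensorProduct.assoc K H H H) (T ⊗ₜ[K] (1:H))) = (Φ T) ⊗ₜ[K] (1:H) := by
    intro T
    induction T using TensorProduct.induction_on with
    | zero => simp
    | tmul a b => simp [hΨ, hΦ, TensorProduct.assoc_tmul, TensorProduct.smul_tmul']
    | add a b ha hb => simp [TensorProduct.add_tmul, ha, hb]
  have key3 : ∀ E : H ⊗[K] H,
      Ψ (LinearMap.lTensor H (comul (R := K)) E) = comul (R := K) (Φ E) := by
    intro E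
    induction E using TensorProduct.induction_on with
    | zero => simp
    | tmul a b => simp [hΨ, hΦ]
    | add a b ha hb => simp [ha, hb]
  calc comul (R := K) (wεt K H h)
      = Ψ (LinearMap.lTensor H (comul (R := K)) Δ1) := by rw [key3, hΦe]
    _ = Ψ (((TensorProduct.assoc K H H H) (Δ1 ⊗ₜ[K] (1:H))) * ((1:H) ⊗ₜ[K] Δ1)) := by
        rw [wh.comul_one_right]
    _ = Ψ ((TensorProduct.assoc K H H H) (Δ1 ⊗ₜ[K] (1:H))) * Δ1 := key1 _
    _ = (wεt K H h ⊗ₜ[K] (1:H)) * Δ1 := by rw [key2, hΦe]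

private lemma F1 (wh : WeakHopf K H) (h : H) :
    comul (R := K) (wεt K H h) = Δ1 * (wεt K H h ⊗ₜ[K] (1:H)) := by
  set gh : H →ₗ[K] K := counit (R := K) ∘ₗ LinearMap.mulRight K h with hgh
  set Φ : H ⊗[K] H →ₗ[K] H :=
    (TensorProduct.lid K H).toLinearMap ∘ₗ LinearMap.rTensor H gh with hΦ
  set Ψ : H ⊗[K] (H ⊗[K] H) →ₗ[K] H ⊗[K] H :=
    (TensorProduct.lid K (H ⊗[K] H)).toLinearMap ∘ₗ LinearMap.rTensor (H ⊗[K] H) gh with hΨ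
  have hΦe : Φ Δ1 = wεt K H h := rfl
  have key1 : ∀ X : H ⊗[K] (H ⊗[K] H), Ψ (((1:H) ⊗ₜ[K] Δ1) * X) = Δ1 * Ψ X := by
    intro X
    induction X using TensorProduct.induction_on with
    | zero => simp
    | tmul a T => simp [hΨ, Algebra.TensorProduct.tmul_mul_tmul, mul_smul_comm]
    | add a b ha hb => simp [mul_add, ha, hb]
  have key2 : ∀ T : H ⊗[K] H,
      Ψ ((TensorProduct.assoc K H H H) (T ⊗ₜ[K] (1:H))) = (Φ T) ⊗ₜ[K] (1:H) := by
    intro T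
    induction T using TensorProduct.induction_on with
    | zero => simp
    | tmul a b => simp [hΨ, hΦ, TensorProduct.assoc_tmul, TensorProduct.smul_tmul']
    | add a b ha hb => simp [TensorProduct.add_tmul, ha, hb]
  have key3 : ∀ E : H ⊗[K] H,
      Ψ (LinearMap.lTensor H (comul (R := K)) E) = comul (R := K) (Φ E) := by
    intro E
    induction E using TensorProduct.induction_on with
    | zero => simp
    | tmul a b => simp [hΨ, hΦ]
    | add a b ha hb => simp [ha, hb]
  calc comul (R := K) (wεt K H h)
      = Ψ (LinearMap.lTensor H (comul (R := K)) Δ1) := by rw [key3, hΦe]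
    _ = Ψ (((1:H) ⊗ₜ[K] Δ1) * ((TensorProduct.assoc K H H H) (Δ1 ⊗ₜ[K] (1:H)))) := by
        rw [wh.comul_one_left]
    _ = Δ1 * Ψ ((TensorProduct.assoc K H H H) (Δ1 ⊗ₜ[K] (1:H))) := key1 _
    _ = Δ1 * (wεt K H h ⊗ₜ[K] (1:H)) := by rw [key2, hΦe]

/-- The map `ι : u ⊗ v ↦ ε(u) • v`. -/
private def ιL (K : Type*) [Field K] (H : Type*) [Ring H] [Algebra K H] [Coalgebra K H] :
    H ⊗[K] H →ₗ[K] H :=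
  (TensorProduct.lid K H).toLinearMap ∘ₗ LinearMap.rTensor H (counit (R := K))

private lemma ιL_comul (a : H) : ιL K H (comul (R := K) a) = a := by
  simp [ιL]

/-- `(id ⊗ ε_t)(Δ1) = Δ1`. -/
private lemma ID1 (wh : WeakHopf K H) :
    LinearMap.lTensor H (εtL K H) Δ1 = Δ1 := by
  set Θ : H ⊗[K] (H ⊗[K] H) →ₗ[K] H ⊗[K] H := LinearMap.lTensor H (ιL K H) with hΘ
  have key2 : ∀ T : H ⊗[K] H,
      Θ (((1:H) ⊗ₜ[K] Δ1) * ((TensorProduct.assoc K H H H) (T ⊗ₜ[K] (1:H))))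
        = LinearMap.lTensor H (εtL K H) T := by
    intro T
    induction T using TensorProduct.induction_on with
    | zero => simp
    | tmul a b =>
        have : ((1:H) ⊗ₜ[K] Δ1) * (a ⊗ₜ[K] (b ⊗ₜ[K] (1:H))) = a ⊗ₜ[K] (Δ1 * (b ⊗ₜ[K] (1:H))) := by
          simp [Algebra.TensorProduct.tmul_mul_tmul]
        simp only [TensorProduct.assoc_tmul, this, hΘ, LinearMap.lTensor_tmul]
        rfl
    | add a b ha hb => simp [TensorProduct.add_tmul, mul_add, ha, hb]
  have key3 : ∀ E : H ⊗[K] H, Θ (LinearMap.lTensor H (comul (R := K)) E) = E := by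
    intro E
    induction E using TensorProduct.induction_on with
    | zero => simp
    | tmul a b => simp [hΘ, ιL_comul]
    | add a b ha hb => simp [ha, hb]
  calc LinearMap.lTensor H (εtL K H) Δ1
      = Θ (((1:H) ⊗ₜ[K] Δ1) * ((TensorProduct.assoc K H H H) (Δ1 ⊗ₜ[K] (1:H)))) := (key2 Δ1).symm
    _ = Θ (LinearMap.lTensor H (comul (R := K)) Δ1) := by rw [wh.comul_one_left]
    _ = Δ1 := key3 Δ1

/-- `(ε_s ⊗ id)(Δh) = (1 ⊗ h)Δ1`. -/
private lemma claimID (wh : WeakHopf K H) (h : H) :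
    LinearMap.rTensor H (εsL K H) (comul (R := K) h) = ((1:H) ⊗ₜ[K] h) * Δ1 := by
  set Θ : H ⊗[K] (H ⊗[K] H) →ₗ[K] H ⊗[K] H := LinearMap.lTensor H (ιL K H) with hΘ
  have EQ6 : ((1:H) ⊗ₜ[K] (comul (R := K) h)) * (LinearMap.lTensor H (comul (R := K)) Δ1)
      = ((1:H) ⊗ₜ[K] (comul (R := K) h)) * ((TensorProduct.assoc K H H H) (Δ1 ⊗ₜ[K] (1:H))) := by
    rw [← wh.comul_one_left, ← mul_assoc]
    congr 1
    have : ((1:H) ⊗ₜ[K] (comul (R := K) h)) * ((1:H) ⊗ₜ[K] Δ1)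
        = (1:H) ⊗ₜ[K] (comul (R := K) h * Δ1) := by
      simp [Algebra.TensorProduct.tmul_mul_tmul]
    rw [this, ← wh.comul_mul, mul_one]
  have keyA : ∀ E : H ⊗[K] H,
      ((1:H) ⊗ₜ[K] (comul (R := K) h)) * (LinearMap.lTensor H (comul (R := K)) E)
        = LinearMap.lTensor H (comul (R := K)) (((1:H) ⊗ₜ[K] h) * E) := by
    intro E
    induction E using TensorProduct.induction_on with
    | zero => simp
    | tmul a b =>
        simp only [LinearMap.lTensor_tmul, Algebra.TensorProduct.tmul_mul_tmul, one_mul,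
          ← wh.comul_mul]
    | add a b ha hb => simp [mul_add, ha, hb]
  have key3 : ∀ E : H ⊗[K] H, Θ (LinearMap.lTensor H (comul (R := K)) E) = E := by
    intro E
    induction E using TensorProduct.induction_on with
    | zero => simp
    | tmul a b => simp [hΘ, ιL_comul]
    | add a b ha hb => simp [ha, hb]
  -- the inner contraction map `b ↦ ι(Δh * (b ⊗ 1))`
  set σ : H →ₗ[K] H :=
    ιL K H ∘ₗ LinearMap.mulLeft K (comul (R := K) h) ∘ₗ ((TensorProduct.mk K H H).flip 1)
    with hσ
  have keyB : ∀ T : H ⊗[K] H,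
      Θ (((1:H) ⊗ₜ[K] (comul (R := K) h)) * ((TensorProduct.assoc K H H H) (T ⊗ₜ[K] (1:H))))
        = LinearMap.lTensor H σ T := by
    intro T
    induction T using TensorProduct.induction_on with
    | zero => simp
    | tmul a b =>
        have : ((1:H) ⊗ₜ[K] (comul (R := K) h)) * (a ⊗ₜ[K] (b ⊗ₜ[K] (1:H)))
            = a ⊗ₜ[K] ((comul (R := K) h) * (b ⊗ₜ[K] (1:H))) := by
          simp [Algebra.TensorProduct.tmul_mul_tmul]
        simp only [TensorProduct.assoc_tmul, this, hΘ, LinearMap.lTensor_tmul]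
        rfl
    | add a b ha hb => simp [TensorProduct.add_tmul, mul_add, ha, hb]
  -- generic contraction identity
  have keyC : ∀ P : H ⊗[K] H,
      LinearMap.lTensor H
        (ιL K H ∘ₗ LinearMap.mulLeft K P ∘ₗ ((TensorProduct.mk K H H).flip 1)) Δ1
        = LinearMap.rTensor H (εsL K H) P := by
    intro P
    induction P using TensorProduct.induction_on with
    | zero =>
        have h0 : (LinearMap.mulLeft K (0 : H ⊗[K] H)) = 0 := by
          ext t; simp
        rw [h0, map_zero]
        have h1 : ιL K H ∘ₗ (0 : (H ⊗[K] H) →ₗ[K] (H ⊗[K] H))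
            ∘ₗ ((TensorProduct.mk K H H).flip 1) = 0 := by
          ext b; simp
        rw [h1]
        simp
    | tmul p w =>
        have hmap : (ιL K H ∘ₗ LinearMap.mulLeft K (p ⊗ₜ[K] w) ∘ₗ ((TensorProduct.mk K H H).flip 1))
            = ((counit (R := K) ∘ₗ LinearMap.mulLeft K p).smulRight w) := by
          ext b
          simp only [LinearMap.comp_apply, LinearMap.flip_apply, TensorProduct.mk_apply,
            LinearMap.mulLeft_apply, Algebra.TensorProduct.tmul_mul_tmul, mul_one, ιL,
            LinearMap.rTensor_tmul, TensorProduct.lid_tmul, LinearMap.smulRight_apply,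
            LinearEquiv.coe_coe]
        rw [hmap]
        have gen : ∀ E : H ⊗[K] H,
            LinearMap.lTensor H ((counit (R := K) ∘ₗ LinearMap.mulLeft K p).smulRight w) E
              = ((TensorProduct.rid K H)
                  (LinearMap.lTensor H (counit (R := K) ∘ₗ LinearMap.mulLeft K p) E)) ⊗ₜ[K] w := by
          intro E
          induction E using TensorProduct.induction_on with
          | zero => simp
          | tmul u v =>
              simp only [LinearMap.lTensor_tmul, LinearMap.smulRight_apply,
                LinearMap.comp_apply, LinearMap.mulLeft_apply, TensorProduct.rid_tmul,
                TensorProduct.tmul_smul, TensorProduct.smul_tmul', LinearEquiv.coe_coe]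
          | add a b ha hb => simp [ha, hb, TensorProduct.add_tmul]
        rw [gen Δ1]
        congr 1
        -- rid (lTensor (ε ∘ mulLeft p) Δ1) = εsL p
        have h4 : LinearMap.lTensor H (counit (R := K) ∘ₗ LinearMap.mulLeft K p) Δ1
            = LinearMap.lTensor H (counit (R := K)) (LinearMap.lTensor H (LinearMap.mulLeft K p) Δ1) := by
          rw [LinearMap.lTensor_comp]; rfl
        rw [h4, ← one_tmul_mul]
        rfl
    | add P Q hP hQ =>
        have : (LinearMap.mulLeft K (P + Q)) = LinearMap.mulLeft K P + LinearMap.mulLeft K Q := by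
          ext t; simp [add_mul]
        rw [this, map_add, ← hP, ← hQ]
        have h2 : ιL K H ∘ₗ (LinearMap.mulLeft K P + LinearMap.mulLeft K Q)
              ∘ₗ ((TensorProduct.mk K H H).flip 1)
            = (ιL K H ∘ₗ LinearMap.mulLeft K P ∘ₗ ((TensorProduct.mk K H H).flip 1))
              + (ιL K H ∘ₗ LinearMap.mulLeft K Q ∘ₗ ((TensorProduct.mk K H H).flip 1)) := by
          ext b; simp
        rw [h2]
        have h3 : ∀ (f g : H →ₗ[K] H) (E : H ⊗[K] H),
            LinearMap.lTensor H (f + g) E = LinearMap.lTensor H f E + LinearMap.lTensor H g E := by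
          intro f g E
          induction E using TensorProduct.induction_on with
          | zero => simp
          | tmul u v => simp [TensorProduct.tmul_add]
          | add a b ha hb =>
              simp only [map_add, ha, hb]; abel
        rw [h3]
  calc LinearMap.rTensor H (εsL K H) (comul (R := K) h)
      = LinearMap.lTensor H σ Δ1 := (keyC (comul (R := K) h)).symm
    _ = Θ (((1:H) ⊗ₜ[K] (comul (R := K) h)) * ((TensorProduct.assoc K H H H) (Δ1 ⊗ₜ[K] (1:H)))) :=
        (keyB Δ1).symm
    _ = Θ (((1:H) ⊗ₜ[K] (comul (R := K) h)) * (LinearMap.lTensor H (comul (R := K)) Δ1)) := by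
        rw [EQ6]
    _ = Θ (LinearMap.lTensor H (comul (R := K)) (((1:H) ⊗ₜ[K] h) * Δ1)) := by rw [keyA]
    _ = ((1:H) ⊗ₜ[K] h) * Δ1 := key3 _

section ActPart

variable {C : Type*} [AddCommGroup C] [Module K C] [Coalgebra K C]
variable {act : H →ₗ[K] C →ₗ[K] C}

private lemma act_nu (hp : IsPartialModuleCoalgebra K H C act) (g : H) (c : C) :
    act g c = pmc3RHS K H C act 1 g c := by
  have := hp.pmc3 1 g c
  rwa [hp.pmc1] at this

private lemma act_star (hp : IsPartialModuleCoalgebra K H C act) (h : H) (c : C) :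
    act h c = pmc3RHS K H C act h 1 c := by
  have := hp.pmc3 h 1 c
  rwa [hp.pmc1] at this

private lemma ttc_rT (f : H →ₗ[K] H) (P : H ⊗[K] H) (Q : C ⊗[K] C) :
    (TensorProduct.tensorTensorTensorComm K H H C C) ((LinearMap.rTensor H f P) ⊗ₜ[K] Q)
      = LinearMap.rTensor (H ⊗[K] C) (LinearMap.rTensor C f)
          ((TensorProduct.tensorTensorTensorComm K H H C C) (P ⊗ₜ[K] Q)) := by
  induction P using TensorProduct.induction_on with
  | zero => simp
  | tmul g₁ g₂ =>
      induction Q using TensorProduct.induction_on with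
      | zero => simp [TensorProduct.tmul_zero]
      | tmul c₁ c₂ => simp [TensorProduct.tensorTensorTensorComm_tmul]
      | add q₁ q₂ h₁ h₂ =>
          simp only [LinearMap.rTensor_tmul] at h₁ h₂
          simp [TensorProduct.tmul_add, h₁, h₂]
  | add p₁ p₂ h₁ h₂ => simp [TensorProduct.add_tmul, h₁, h₂]

private lemma pmc3RHS_comp (p x g g' : H) (c : C)
    (hΔ : comul (R := K) g' = LinearMap.rTensor H (LinearMap.mulLeft K x) (comul (R := K) g)) :
    pmc3RHS K H C act p g' c = pmc3RHS K H C act (p * x) g c := by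
  unfold pmc3RHS
  rw [hΔ, ttc_rT]
  congr 1
  have key : ∀ Z : (H ⊗[K] C) ⊗[K] (H ⊗[K] C),
      (TensorProduct.map ((TensorProduct.lift act) ∘ₗ LinearMap.rTensor C (LinearMap.mulLeft K p))
        (counit (R := K) ∘ₗ TensorProduct.lift act))
        (LinearMap.rTensor (H ⊗[K] C) (LinearMap.rTensor C (LinearMap.mulLeft K x)) Z)
      = (TensorProduct.map
          ((TensorProduct.lift act) ∘ₗ LinearMap.rTensor C (LinearMap.mulLeft K (p * x)))
          (counit (R := K) ∘ₗ TensorProduct.lift act)) Z := by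
    intro Z
    induction Z using TensorProduct.induction_on with
    | zero => simp
    | tmul P' Q' =>
        simp only [LinearMap.rTensor_tmul, TensorProduct.map_tmul, LinearMap.comp_apply]
        have : LinearMap.rTensor C (LinearMap.mulLeft K p)
              (LinearMap.rTensor C (LinearMap.mulLeft K x) P')
            = LinearMap.rTensor C (LinearMap.mulLeft K (p * x)) P' := by
          rw [← LinearMap.comp_apply, ← LinearMap.rTensor_comp, ← LinearMap.mulLeft_mul]
        rw [this]
    | add a b ha hb => simp [ha, hb]
  exact key _

private lemma comul_wεt_mul (wh : WeakHopf K H) (h g : H) :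
    comul (R := K) (wεt K H h * g)
      = LinearMap.rTensor H (LinearMap.mulLeft K (wεt K H h)) (comul (R := K) g) := by
  rw [wh.comul_mul, F1' wh, mul_assoc]
  have h1 : Δ1 * comul (R := K) g = comul (R := K) g := by
    rw [← wh.comul_mul, one_mul]
  rw [h1, tmul_one_mul]

private lemma part_i (wh : WeakHopf K H) (hp : IsPartialModuleCoalgebra K H C act)
    (h g : H) (c : C) :
    act (wεt K H h) (act g c) = act (wεt K H h * g) c := by
  rw [hp.pmc3, act_nu hp (wεt K H h * g) c,
    pmc3RHS_comp 1 (wεt K H h) g _ c (comul_wεt_mul wh h g), one_mul]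

private lemma part_i' (wh : WeakHopf K H) (hp : IsPartialModuleCoalgebra K H C act)
    (g h : H) (c : C) :
    act g (act (wεt K H h) c) = act (g * wεt K H h) c := by
  have hΔ : comul (R := K) (wεt K H h)
      = LinearMap.rTensor H (LinearMap.mulLeft K (wεt K H h)) Δ1 := by
    rw [F1' wh, tmul_one_mul]
  rw [hp.pmc3, pmc3RHS_comp g (wεt K H h) 1 _ c hΔ, ← act_star hp]

private lemma F2 (hp : IsPartialModuleCoalgebra K H C act) (c : C) :
    comul (R := K) c
      = (TensorProduct.map (TensorProduct.lift act) (TensorProduct.lift act))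
          ((TensorProduct.tensorTensorTensorComm K H H C C) (Δ1 ⊗ₜ[K] comul (R := K) c)) := by
  have := hp.pmc2 1 c
  rwa [hp.pmc1] at this

private lemma part_ii (wh : WeakHopf K H) (hp : IsPartialModuleCoalgebra K H C act)
    (h : H) (c : C) :
    comul (R := K) (act (wεt K H h) c)
      = LinearMap.rTensor C (act (wεt K H h)) (comul (R := K) c) := by
  set x := wεt K H h with hx
  have hAct : ∀ P : H ⊗[K] C,
      TensorProduct.lift act (LinearMap.rTensor C (LinearMap.mulLeft K x) P)
        = act x (TensorProduct.lift act P) := by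
    intro P
    induction P using TensorProduct.induction_on with
    | zero => simp
    | tmul a u =>
        simp only [LinearMap.rTensor_tmul, TensorProduct.lift.tmul, LinearMap.mulLeft_apply]
        rw [hx, ← part_i wh hp h a u]
    | add a b ha hb => simp [ha, hb]
  have hΔx : comul (R := K) x = LinearMap.rTensor H (LinearMap.mulLeft K x) Δ1 := by
    rw [hx, F1' wh, tmul_one_mul]
  have hRHS : LinearMap.rTensor C (act x) (comul (R := K) c)
      = LinearMap.rTensor C (act x)
          ((TensorProduct.map (TensorProduct.lift act) (TensorProduct.lift act))
            ((TensorProduct.tensorTensorTensorComm K H H C C)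
              (Δ1 ⊗ₜ[K] comul (R := K) c))) := by
    rw [← F2 hp c]
  rw [hp.pmc2 x c, hΔx, ttc_rT, hRHS]
  generalize ((TensorProduct.tensorTensorTensorComm K H H C C)
      (Δ1 ⊗ₜ[K] comul (R := K) c)) = Z
  induction Z using TensorProduct.induction_on with
  | zero => simp
  | tmul P' Q' =>
      simp only [LinearMap.rTensor_tmul, TensorProduct.map_tmul]
      rw [hAct]
  | add a b ha hb => simp [ha, hb]

private lemma part_iii (wh : WeakHopf K H) (hp : IsPartialModuleCoalgebra K H C act)
    (h : H) (c : C) :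
    counit (R := K) (act (wεt K H h) c)
      = counit (R := K) (act (wεs K H (wεt K H h)) c) := by
  set x := wεt K H h with hx
  -- `B₁ (u ⊗ v) = ε ((S u * v) · c)`
  set B₁ : H ⊗[K] H →ₗ[K] K :=
    (counit (R := K)) ∘ₗ (act.flip c) ∘ₗ (LinearMap.mul' K H) ∘ₗ (LinearMap.rTensor H wh.S)
    with hB₁
  -- `B₂ (u ⊗ v) = ε (S u · (v · c))`
  set β : H →ₗ[K] H →ₗ[K] C := LinearMap.mk₂ K (fun u v => act (wh.S u) (act v c))
    (fun u u' v => by simp [map_add])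
    (fun r u v => by simp)
    (fun u v v' => by simp [map_add])
    (fun r u v => by simp) with hβ
  set B₂ : H ⊗[K] H →ₗ[K] K := (counit (R := K)) ∘ₗ TensorProduct.lift β with hB₂
  -- `ν (p ⊗ w) = Σ ε(p·c₁) ε(w·c₂)`
  set ν : H ⊗[K] H →ₗ[K] K :=
    (LinearMap.mul' K K)
      ∘ₗ (TensorProduct.map (counit (R := K) ∘ₗ TensorProduct.lift act)
            (counit (R := K) ∘ₗ TensorProduct.lift act))
      ∘ₗ (TensorProduct.tensorTensorTensorComm K H H C C).toLinearMap
      ∘ₗ ((TensorProduct.mk K (H ⊗[K] H) (C ⊗[K] C)).flip (comul (R := K) c)) with hν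
  have hνval : ∀ T : H ⊗[K] H,
      ν T = (LinearMap.mul' K K)
          ((TensorProduct.map (counit (R := K) ∘ₗ TensorProduct.lift act)
              (counit (R := K) ∘ₗ TensorProduct.lift act))
            ((TensorProduct.tensorTensorTensorComm K H H C C)
              (T ⊗ₜ[K] comul (R := K) c))) := fun T => rfl
  -- (id ⊗ ε_t) Δx = Δx
  have hID1x : LinearMap.lTensor H (εtL K H) (comul (R := K) x) = comul (R := K) x := by
    have hF1 : comul (R := K) x
        = LinearMap.rTensor H (LinearMap.mulRight K x) Δ1 := by
      rw [hx, F1 wh, mul_tmul_one]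
    rw [hF1, ← LinearMap.comp_apply, LinearMap.lTensor_comp_rTensor,
      ← LinearMap.rTensor_comp_lTensor, LinearMap.comp_apply, ID1 wh]
  -- step (c): B₁ Δx = B₂ Δx
  have stepC : B₁ (comul (R := K) x) = B₂ (comul (R := K) x) := by
    rw [← hID1x]
    have key : ∀ T : H ⊗[K] H,
        B₁ (LinearMap.lTensor H (εtL K H) T) = B₂ (LinearMap.lTensor H (εtL K H) T) := by
      intro T
      induction T using TensorProduct.induction_on with
      | zero => simp
      | tmul u v =>
          simp only [LinearMap.lTensor_tmul, hB₁, hB₂, hβ, LinearMap.comp_apply,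
            LinearMap.rTensor_tmul, LinearMap.mul'_apply, LinearMap.flip_apply,
            TensorProduct.lift.tmul, LinearMap.mk₂_apply]
          rw [εtL_eq, part_i' wh hp (wh.S u) v c]
      | add a b ha hb => simp [ha, hb]
    exact key _
  -- the map γ : u ⊗ v ↦ (S u · v₁) ⊗ v₂
  set γ : H ⊗[K] H →ₗ[K] H ⊗[K] H :=
    (LinearMap.rTensor H ((LinearMap.mul' K H) ∘ₗ (LinearMap.rTensor H wh.S)))
      ∘ₗ (TensorProduct.assoc K H H H).symm.toLinearMap
      ∘ₗ (LinearMap.lTensor H (comul (R := K))) with hγ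
  have d2a : ∀ (u : H) (P : H ⊗[K] H),
      LinearMap.rTensor H ((LinearMap.mul' K H) ∘ₗ (LinearMap.rTensor H wh.S))
          ((TensorProduct.assoc K H H H).symm (u ⊗ₜ[K] P))
        = LinearMap.rTensor H (LinearMap.mulLeft K (wh.S u)) P := by
    intro u P
    induction P using TensorProduct.induction_on with
    | zero => simp
    | tmul v₁ v₂ =>
        simp [TensorProduct.assoc_symm_tmul]
    | add a b ha hb => simp [TensorProduct.tmul_add, ha, hb]
  -- scalar form of pmc3RHS
  have SC1 : ∀ (p : H) (P : H ⊗[K] H) (Q : C ⊗[K] C),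
      counit (R := K) ((TensorProduct.rid K C)
        ((TensorProduct.map
            ((TensorProduct.lift act) ∘ₗ LinearMap.rTensor C (LinearMap.mulLeft K p))
            (counit (R := K) ∘ₗ TensorProduct.lift act))
          ((TensorProduct.tensorTensorTensorComm K H H C C) (P ⊗ₜ[K] Q))))
      = (LinearMap.mul' K K)
          ((TensorProduct.map (counit (R := K) ∘ₗ TensorProduct.lift act)
              (counit (R := K) ∘ₗ TensorProduct.lift act))
            ((TensorProduct.tensorTensorTensorComm K H H C C)
              ((LinearMap.rTensor H (LinearMap.mulLeft K p) P) ⊗ₜ[K] Q))) := by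
    intro p P Q
    induction P using TensorProduct.induction_on with
    | zero => simp
    | tmul g₁ g₂ =>
        induction Q using TensorProduct.induction_on with
        | zero => simp [TensorProduct.tmul_zero]
        | tmul c₁ c₂ =>
            simp only [TensorProduct.tensorTensorTensorComm_tmul, TensorProduct.map_tmul,
              LinearMap.comp_apply, LinearMap.rTensor_tmul, LinearMap.mulLeft_apply,
              TensorProduct.rid_tmul, TensorProduct.lift.tmul, LinearMap.mul'_apply,
              map_smul, smul_eq_mul]
            ring
        | add q₁ q₂ h₁ h₂ =>
            simp only [LinearMap.rTensor_tmul] at h₁ h₂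
            simp [TensorProduct.tmul_add, h₁, h₂]
    | add p₁ p₂ h₁ h₂ => simp [TensorProduct.add_tmul, h₁, h₂]
  -- step (d): B₂ = ν ∘ γ
  have d1 : ∀ u v : H, B₂ (u ⊗ₜ[K] v) = ν (γ (u ⊗ₜ[K] v)) := by
    intro u v
    have e1 : B₂ (u ⊗ₜ[K] v) = counit (R := K) (act (wh.S u) (act v c)) := by
      simp [hB₂, hβ]
    rw [e1, hp.pmc3]
    unfold pmc3RHS
    rw [SC1 (wh.S u) (comul (R := K) v) (comul (R := K) c)]
    have e2 : γ (u ⊗ₜ[K] v)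
        = LinearMap.rTensor H (LinearMap.mulLeft K (wh.S u)) (comul (R := K) v) := by
      rw [hγ]
      simp only [LinearMap.comp_apply, LinearMap.lTensor_tmul, LinearEquiv.coe_coe]
      rw [d2a]
    rw [e2, hνval]
  have hB₂γ : B₂ = ν ∘ₗ γ := TensorProduct.ext' (fun u v => by rw [d1]; rfl)
  -- γ Δx = (ε_s ⊗ id) Δx
  have hγx : γ (comul (R := K) x)
      = LinearMap.rTensor H (εsL K H) (comul (R := K) x) := by
    rw [hγ]
    simp only [LinearMap.comp_apply, LinearEquiv.coe_coe]
    have h1 : (TensorProduct.assoc K H H H).symm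
        (LinearMap.lTensor H (comul (R := K)) (comul (R := K) x))
        = LinearMap.rTensor H (comul (R := K)) (comul (R := K) x) :=
      Coalgebra.coassoc_symm_apply x
    rw [h1, ← LinearMap.comp_apply, ← LinearMap.rTensor_comp]
    have h2 : (LinearMap.mul' K H ∘ₗ LinearMap.rTensor H wh.S)
          ∘ₗ (comul (R := K) (A := H)) = εsL K H := by
      apply LinearMap.ext; intro y
      simp only [LinearMap.comp_apply]
      rw [wh.antipode_s y, ← εsL_eq]
    rw [h2]
  -- step (f): evaluation of ν on (1 ⊗ x)Δ1
  have stepF : ∀ T : H ⊗[K] H,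
      ν (LinearMap.lTensor H (LinearMap.mulLeft K x) T)
        = counit (R := K) (act x ((TensorProduct.lid K C)
            ((TensorProduct.map (counit (R := K) ∘ₗ TensorProduct.lift act)
                (TensorProduct.lift act))
              ((TensorProduct.tensorTensorTensorComm K H H C C)
                (T ⊗ₜ[K] comul (R := K) c))))) := by
    intro T
    induction T using TensorProduct.induction_on with
    | zero => simp
    | tmul u v =>
        rw [hνval]
        have gen : ∀ Q : C ⊗[K] C,
            (LinearMap.mul' K K)
              ((TensorProduct.map (counit (R := K) ∘ₗ TensorProduct.lift act)
                  (counit (R := K) ∘ₗ TensorProduct.lift act))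
                ((TensorProduct.tensorTensorTensorComm K H H C C)
                  ((u ⊗ₜ[K] (x * v)) ⊗ₜ[K] Q)))
            = counit (R := K) (act x ((TensorProduct.lid K C)
                ((TensorProduct.map (counit (R := K) ∘ₗ TensorProduct.lift act)
                    (TensorProduct.lift act))
                  ((TensorProduct.tensorTensorTensorComm K H H C C)
                    ((u ⊗ₜ[K] v) ⊗ₜ[K] Q))))) := by
          intro Q
          induction Q using TensorProduct.induction_on with
          | zero => simp
          | tmul c₁ c₂ =>
              simp only [TensorProduct.tensorTensorTensorComm_tmul, TensorProduct.map_tmul,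
                LinearMap.comp_apply, TensorProduct.lift.tmul, LinearMap.mul'_apply,
                TensorProduct.lid_tmul, map_smul, smul_eq_mul]
              rw [hx, part_i wh hp h v c₂]
          | add q₁ q₂ h₁ h₂ => simp [TensorProduct.tmul_add, h₁, h₂]
        simpa only [LinearMap.lTensor_tmul, LinearMap.mulLeft_apply] using gen (comul (R := K) c)
    | add a b ha hb => simp [ha, hb, TensorProduct.add_tmul]
  -- P-collapse: ρ Δ1 = c
  have hρ : (TensorProduct.lid K C)
      ((TensorProduct.map (counit (R := K) ∘ₗ TensorProduct.lift act) (TensorProduct.lift act))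
        ((TensorProduct.tensorTensorTensorComm K H H C C)
          (Δ1 ⊗ₜ[K] comul (R := K) c))) = c := by
    have hsplit : (TensorProduct.map (counit (R := K) ∘ₗ TensorProduct.lift act)
          (TensorProduct.lift act))
        = (LinearMap.rTensor C (counit (R := K)))
            ∘ₗ (TensorProduct.map (TensorProduct.lift act) (TensorProduct.lift act)) := by
      have hr : LinearMap.rTensor C (counit (R := K) (A := C))
          = TensorProduct.map (counit (R := K)) LinearMap.id := rfl
      rw [hr, ← TensorProduct.map_comp, LinearMap.id_comp]
    rw [hsplit, LinearMap.comp_apply, ← F2 hp c]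
    rw [Coalgebra.rTensor_counit_comul]
    simp
  -- assemble
  have start : counit (R := K) (act (wεs K H x) c) = B₁ (comul (R := K) x) := by
    rw [hB₁]
    simp only [LinearMap.comp_apply, LinearMap.flip_apply]
    rw [wh.antipode_s x]
  calc counit (R := K) (act x c)
      = ν (LinearMap.lTensor H (LinearMap.mulLeft K x) Δ1) := by rw [stepF Δ1, hρ]
    _ = ν (LinearMap.rTensor H (εsL K H) (comul (R := K) x)) := by
        rw [← one_tmul_mul, ← claimID wh x]
    _ = ν (γ (comul (R := K) x)) := by rw [hγx]
    _ = B₂ (comul (R := K) x) := by rw [hB₂γ]; rfl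
    _ = B₁ (comul (R := K) x) := stepC.symm
    _ = counit (R := K) (act (wεs K H x) c) := start.symm

end ActPart

end Aux

/-- Properties of the action of elements of `H_t` on a partial module
coalgebra: (i) `h·(k·c) = hk·c`; (ii) `Δ(h·c) = (h·c₁) ⊗ c₂`; (iii) `ε(h·c) = ε(ε_s(h)·c)`. -/
theorem target_elements_act_globally
    (k : Type*) [Field k] (H : Type*) [Ring H] [Algebra k H] [Coalgebra k H]
    (C : Type*) [AddCommGroup C] [Module k C] [Coalgebra k C]
    (wh : WeakHopf k H) (act : H →ₗ[k] C →ₗ[k] C)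
    (hp : IsPartialModuleCoalgebra k H C act) :
    (∀ h ∈ Set.range (wεt k H), ∀ (g : H) (c : C), act h (act g c) = act (h * g) c) ∧
    (∀ h ∈ Set.range (wεt k H), ∀ c : C,
        comul (R := k) (act h c) = LinearMap.rTensor C (act h) (comul (R := k) c)) ∧
    (∀ h ∈ Set.range (wεt k H), ∀ c : C,
        counit (R := k) (act h c) = counit (R := k) (act (wεs k H h) c)) := by
  refine ⟨?_, ?_, ?_⟩
  · rintro h ⟨h', rfl⟩ g c
    exact part_i wh hp h' g c
  · rintro h ⟨h', rfl⟩ c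
    exact part_ii wh hp h' c
  · rintro h ⟨h', rfl⟩ c
    exact part_iii wh hp h' c
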